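/- There exist absolute constants c_1 ∈ (0,1) and C_2 ∈ (0,∞) such that the following holds. Let G = Z_{m_1} ⊕ ... ⊕ Z_{m_d} be a finite Abelian group of size n, let k ≥ 1, let x ∈ G with integer coordinates x_j, set g_j := gcd(x_j, m_j) and s_* := max_{1≤j≤d} m_j/g_j, and let Z_1, ..., Z_k be i.i.d. uniform on G with Z_i^{(j)} ∈ {0,...,m_j−1} the j-th coordinate of Z_i. Write {alpha} for the unique element of (−1/2, 1/2] with alpha − {alpha} ∈ ℤ. If s_* ≤ C_2·n^{1/k}, then P( (1/k)·Σ_{i=1}^k { Σ_{j=1}^d x_j·Z_i^{(j)}/m_j }^2 ≤ c_1·n^{−2/k} ) ≤ s_*^{−9k/10}; and if s_* > C_2·n^{1/k}, then P( (1/k)·Σ_{i=1}^k { Σ_{j=1}^d x_j·Z_i^{(j)}/m_j }^2 ≤ c_1·n^{−2/k} ) ≤ 2^{−k}/n. -/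

import Mathlib

/-- `{α}`: the unique element of `(−1/2, 1/2]` with `α − {α} ∈ ℤ`. -/
noncomputable def signedFrac (a : ℝ) : ℝ := a - (⌈a - 1 / 2⌉ : ℤ)

/-- Probability, over a uniformly random `k`-tuple of elements of `G`, of the event `p`. -/
noncomputable def tupleProb (G : Type*) [Fintype G] (k : ℕ) (p : (Fin k → G) → Prop) : ℝ :=
  (Nat.card {z : Fin k → G // p z} : ℝ) / (Fintype.card G : ℝ) ^ k

open Real Finset

lemma tupleProb_le_one (G : Type*) [Fintype G] [Nonempty G] (k : ℕ) (p : (Fin k → G) → Prop) :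
    tupleProb G k p ≤ 1 := by
  classical
  unfold tupleProb
  have hpos : (0:ℝ) < (Fintype.card G : ℝ)^k := by
    apply pow_pos
    exact_mod_cast Fintype.card_pos
  rw [div_le_one hpos]
  have h1 : Nat.card {z : Fin k → G // p z} ≤ Nat.card (Fin k → G) := by
    exact Nat.card_le_card_of_injective (fun z => z.1) Subtype.val_injective
  have h2 : Nat.card (Fin k → G) = Fintype.card G ^ k := by
    rw [Nat.card_eq_fintype_card, Fintype.card_fun, Fintype.card_fin]
  calc (Nat.card {z : Fin k → G // p z} : ℝ) ≤ (Fintype.card G ^ k : ℕ) := by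
        exact_mod_cast h2 ▸ h1
    _ = (Fintype.card G : ℝ)^k := by push_cast; ring

open Real Finset

lemma sf_int_add (a : ℝ) (t : ℤ) : signedFrac (a + t) = signedFrac a := by
  unfold signedFrac
  have : a + t - 1/2 = (a - 1/2) + t := by ring
  rw [this, Int.ceil_add_intCast]
  push_cast; ring

lemma sf_eq_self {a : ℝ} (h1 : -(1/2) < a) (h2 : a ≤ 1/2) : signedFrac a = a := by
  unfold signedFrac
  have : ⌈a - 1/2⌉ = 0 := by
    rw [Int.ceil_eq_zero_iff]
    constructor <;> simp <;> linarith
  rw [this]; simp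

/-- signed integer representative -/
def eb (L : ℕ) [NeZero L] (b : ZMod L) : ℤ :=
  if 2 * b.val ≤ L then (b.val : ℤ) else (b.val : ℤ) - L

section EB
variable (L : ℕ) [NeZero L]

lemma eb_lb (b : ZMod L) : -(L:ℤ) < 2 * eb L b := by
  have hv := b.val_lt
  unfold eb; split <;> push_cast <;> omega

lemma eb_ub (b : ZMod L) : 2 * eb L b ≤ L := by
  have hv := b.val_lt
  unfold eb; split <;> push_cast <;> omega

lemma sf_eq_eb (b : ZMod L) :
    signedFrac ((b.val : ℝ) / L) = (eb L b : ℝ) / L := by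
  have hL : (0:ℝ) < L := by
    exact_mod_cast Nat.pos_of_ne_zero (NeZero.ne L)
  have hlb : -(1/2 : ℝ) < (eb L b : ℝ) / L := by
    rw [lt_div_iff₀ hL]
    have := eb_lb L b
    have : -(L:ℝ) < 2 * (eb L b : ℝ) := by exact_mod_cast this
    nlinarith
  have hub : (eb L b : ℝ) / L ≤ 1/2 := by
    rw [div_le_iff₀ hL]
    have := eb_ub L b
    have : 2 * (eb L b : ℝ) ≤ L := by exact_mod_cast this
    nlinarith
  have key : ((b.val : ℝ)) / L = (eb L b : ℝ)/L + ((if 2 * b.val ≤ L then 0 else 1 : ℤ) : ℝ) := by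
    unfold eb
    split <;> push_cast <;> field_simp <;> ring
  rw [key, sf_int_add, sf_eq_self hlb hub]

lemma eb_injective : Function.Injective (eb L) := by
  intro a b hab
  have ha := a.val_lt; have hb := b.val_lt
  have : (a.val : ℤ) = b.val := by
    unfold eb at hab
    split_ifs at hab <;> omega
  have : a.val = b.val := by exact_mod_cast this
  exact ZMod.val_injective L this

end EB

section Theta

open MeasureTheory in
lemma gauss_tail_integral {lam : ℝ} (hlam : 0 < lam) (a : ℕ) :
    ∑ c ∈ Finset.range a, Real.exp (-lam * ((c:ℝ)+1)^2) ≤ Real.sqrt (π/lam) / 2 := by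
  have hf : AntitoneOn (fun t : ℝ => Real.exp (-lam*t^2)) (Set.Icc 0 (0 + (a:ℝ))) := by
    intro p hp q hq hpq
    simp only
    apply Real.exp_le_exp.2
    have hp0 : 0 ≤ p := hp.1
    have hsq : p^2 ≤ q^2 := by nlinarith
    nlinarith
  have h1 := hf.sum_le_integral
  have h2 : ∑ c ∈ Finset.range a, Real.exp (-lam * ((c:ℝ)+1)^2) =
      ∑ i ∈ Finset.range a, (fun t : ℝ => Real.exp (-lam*t^2)) ((0:ℝ) + ((i + 1 : ℕ):ℝ)) := by
    apply Finset.sum_congr rfl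
    intro i _
    push_cast
    ring_nf
  rw [h2]
  refine h1.trans ?_
  have h3 : (0:ℝ) ≤ (a:ℝ) := Nat.cast_nonneg a
  rw [intervalIntegral.integral_of_le (by linarith)]
  have h4 : ∫ x in Set.Ioc (0:ℝ) (0 + (a:ℝ)), Real.exp (-lam*x^2) ≤
      ∫ x in Set.Ioi (0:ℝ), Real.exp (-lam*x^2) := by
    apply setIntegral_mono_set (integrable_exp_neg_mul_sq hlam).integrableOn
    · filter_upwards with t using (Real.exp_pos _).le
    · exact (Set.Ioc_subset_Ioi_self).eventuallyLE
  refine h4.trans ?_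
  rw [integral_gaussian_Ioi]

lemma geom_tail {lam : ℝ} (hlam : 0 < lam) (a : ℕ) :
    ∑ c ∈ Finset.range a, Real.exp (-lam * ((c:ℝ)+1)^2) ≤
      Real.exp (-lam) / (1 - Real.exp (-lam)) := by
  have hr0 : 0 < Real.exp (-lam) := Real.exp_pos _
  have hr1 : Real.exp (-lam) < 1 := Real.exp_lt_one_iff.2 (by linarith)
  set r := Real.exp (-lam) with hr
  have step : ∀ c : ℕ, Real.exp (-lam * ((c:ℝ)+1)^2) ≤ r^(c+1) := by
    intro c
    have : (-lam) * ((c:ℝ)+1) = -lam * ((c:ℝ)+1) := rfl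
    rw [hr, ← Real.exp_nat_mul]
    apply Real.exp_le_exp.2
    have hc : (0:ℝ) ≤ (c:ℝ) := Nat.cast_nonneg c
    push_cast
    nlinarith [mul_nonneg (mul_nonneg hlam.le hc) (by linarith : (0:ℝ) ≤ (c:ℝ)+1)]
  calc ∑ c ∈ Finset.range a, Real.exp (-lam * ((c:ℝ)+1)^2)
      ≤ ∑ c ∈ Finset.range a, r^(c+1) := Finset.sum_le_sum (fun c _ => step c)
    _ = r * ∑ c ∈ Finset.range a, r^c := by rw [Finset.mul_sum]; apply Finset.sum_congr rfl; intros; ring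
    _ ≤ r * (1/(1-r)) := by
        apply mul_le_mul_of_nonneg_left _ hr0.le
        rw [geom_sum_eq (by intro h; rw [h] at hr1; linarith)]
        have h1r : (0:ℝ) < 1 - r := by linarith
        have heq : (r^a - 1)/(r-1) = (1 - r^a)/(1-r) := by
          rw [div_eq_div_iff (by linarith) (by linarith)]; ring
        rw [heq]
        have : 0 ≤ r^a := pow_nonneg hr0.le a
        gcongr
        linarith
    _ = r / (1-r) := by ring

end Theta

section ThetaSum
variable (L : ℕ) [NeZero L]

noncomputable def thetaSum (mu : ℝ) : ℝ :=
  ∑ b : ZMod L, Real.exp (-mu * (signedFrac ((b.val:ℝ)/(L:ℝ)))^2)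

lemma thetaSum_le (mu : ℝ) :
    thetaSum L mu ≤ 1 + 2 * ∑ c ∈ Finset.range L,
      Real.exp (-(mu/(L:ℝ)^2) * ((c:ℝ)+1)^2) := by
  classical
  have hL0 : 0 < L := Nat.pos_of_ne_zero (NeZero.ne L)
  have hLR : (0:ℝ) < (L:ℝ) := by exact_mod_cast hL0
  set F : ℤ → ℝ := fun e => Real.exp (-(mu/(L:ℝ)^2) * (e:ℝ)^2) with hF
  have hFnn : ∀ e : ℤ, 0 ≤ F e := fun e => (Real.exp_pos _).le
  have hterm : ∀ b : ZMod L, Real.exp (-mu * (signedFrac ((b.val:ℝ)/(L:ℝ)))^2) = F (eb L b) := by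
    intro b
    rw [sf_eq_eb]
    congr 1
    field_simp
    try ring
  have h1 : thetaSum L mu = ∑ e ∈ Finset.univ.image (eb L), F e := by
    rw [Finset.sum_image (fun a _ b _ h => eb_injective L h)]
    unfold thetaSum
    exact Finset.sum_congr rfl (fun b _ => hterm b)
  have hsub : Finset.univ.image (eb L) ⊆ Finset.Icc (-(L:ℤ)) (L:ℤ) := by
    intro e he
    simp only [Finset.mem_image] at he
    obtain ⟨b, _, rfl⟩ := he
    have h1 := eb_lb L b
    have h2 := eb_ub L b
    simp only [Finset.mem_Icc]
    omega
  have h2 : thetaSum L mu ≤ ∑ e ∈ Finset.Icc (-(L:ℤ)) (L:ℤ), F e := by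
    rw [h1]
    exact Finset.sum_le_sum_of_subset_of_nonneg hsub (fun e _ _ => hFnn e)
  refine h2.trans ?_
  -- decompose Icc (-L) L
  have hdec : Finset.Icc (-(L:ℤ)) (L:ℤ) =
      insert 0 ((Finset.Icc (-(L:ℤ)) (-1)) ∪ Finset.Icc (1:ℤ) (L:ℤ)) := by
    ext e
    simp only [Finset.mem_Icc, Finset.mem_insert, Finset.mem_union]
    omega
  have hnotmem : (0:ℤ) ∉ (Finset.Icc (-(L:ℤ)) (-1)) ∪ Finset.Icc (1:ℤ) (L:ℤ) := by
    simp only [Finset.mem_union, Finset.mem_Icc]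
    omega
  have hdisj : Disjoint (Finset.Icc (-(L:ℤ)) (-1)) (Finset.Icc (1:ℤ) (L:ℤ)) := by
    rw [Finset.disjoint_left]
    intro e h1 h2
    simp only [Finset.mem_Icc] at h1 h2
    omega
  rw [hdec, Finset.sum_insert hnotmem, Finset.sum_union hdisj]
  have hF0 : F 0 = 1 := by simp [hF]
  have hneg : Finset.Icc (-(L:ℤ)) (-1) = (Finset.Icc (1:ℤ) (L:ℤ)).image (fun e => -e) := by
    ext e
    simp only [Finset.mem_Icc, Finset.mem_image]
    constructor
    · intro h; exact ⟨-e, by omega, by omega⟩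
    · rintro ⟨c, hc, rfl⟩; omega
  have hrefl : ∑ e ∈ Finset.Icc (-(L:ℤ)) (-1), F e = ∑ e ∈ Finset.Icc (1:ℤ) (L:ℤ), F e := by
    rw [hneg, Finset.sum_image (by intro a _ b _ h; have h' : -a = -b := h; omega)]
    apply Finset.sum_congr rfl
    intro e _
    simp only [hF, Int.cast_neg]
    ring_nf
  have hrange : ∑ e ∈ Finset.Icc (1:ℤ) (L:ℤ), F e =
      ∑ c ∈ Finset.range L, Real.exp (-(mu/(L:ℝ)^2) * ((c:ℝ)+1)^2) := by
    rw [show Finset.Icc (1:ℤ) (L:ℤ) = (Finset.range L).image (fun c : ℕ => (c:ℤ)+1) by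
      ext e
      simp only [Finset.mem_Icc, Finset.mem_image, Finset.mem_range]
      constructor
      · intro h; exact ⟨(e-1).toNat, by omega, by omega⟩
      · rintro ⟨c, hc, rfl⟩; omega]
    rw [Finset.sum_image (by intro a _ b _ h; have h' : (a:ℤ)+1 = (b:ℤ)+1 := h; omega)]
    apply Finset.sum_congr rfl
    intro c _
    simp only [hF]
    push_cast
    ring_nf
  rw [hF0, hrefl, hrange]
  linarith

end ThetaSum

section Group
variable {d : ℕ} (m : Fin d → ℕ) [∀ j, NeZero (m j)] (x : Fin d → ℕ)

def qf (j : Fin d) : ℕ := m j / Nat.gcd (x j) (m j)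

def Lf : ℕ := Finset.univ.lcm (qf m x)

def cf (j : Fin d) : ℕ := (x j / Nat.gcd (x j) (m j)) * (Lf m x / qf m x j)

variable {m x}

lemma qf_ne_zero (j : Fin d) : qf m x j ≠ 0 := by
  have hm : 0 < m j := Nat.pos_of_ne_zero (NeZero.ne _)
  have hg : 0 < Nat.gcd (x j) (m j) := Nat.gcd_pos_of_pos_right _ hm
  have : 0 < m j / Nat.gcd (x j) (m j) :=
    Nat.div_pos (Nat.le_of_dvd hm (Nat.gcd_dvd_right _ _)) hg
  exact this.ne'

lemma Lf_ne_zero : Lf m x ≠ 0 := by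
  unfold Lf
  rw [Ne, Finset.lcm_eq_zero_iff]
  intro h
  obtain ⟨j, _, hj⟩ := h
  exact qf_ne_zero j hj

lemma qf_dvd_Lf (j : Fin d) : qf m x j ∣ Lf m x := Finset.dvd_lcm (Finset.mem_univ j)

lemma m_mul_cf (j : Fin d) : m j * cf m x j = x j * Lf m x := by
  have hg : Nat.gcd (x j) (m j) ∣ m j := Nat.gcd_dvd_right _ _
  have hgx : Nat.gcd (x j) (m j) ∣ x j := Nat.gcd_dvd_left _ _
  unfold cf
  calc m j * ((x j / Nat.gcd (x j) (m j)) * (Lf m x / qf m x j))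
      = (Nat.gcd (x j) (m j) * qf m x j) * ((x j / Nat.gcd (x j) (m j)) * (Lf m x / qf m x j)) := by
        unfold qf; rw [Nat.mul_div_cancel' hg]
    _ = (Nat.gcd (x j) (m j) * (x j / Nat.gcd (x j) (m j))) * (qf m x j * (Lf m x / qf m x j)) := by
        ring
    _ = x j * Lf m x := by rw [Nat.mul_div_cancel' hgx, Nat.mul_div_cancel' (qf_dvd_Lf j)]

lemma gcd_Lf_cf (j : Fin d) : Nat.gcd (Lf m x) (cf m x j) = Lf m x / qf m x j := by
  have hm : 0 < m j := Nat.pos_of_ne_zero (NeZero.ne _)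
  have hg : 0 < Nat.gcd (x j) (m j) := Nat.gcd_pos_of_pos_right _ hm
  have hco : Nat.Coprime (x j / Nat.gcd (x j) (m j)) (qf m x j) :=
    Nat.coprime_div_gcd_div_gcd hg
  conv_lhs => rw [show Lf m x = (Lf m x / qf m x j) * qf m x j from
    (Nat.div_mul_cancel (qf_dvd_Lf j)).symm]
  rw [show cf m x j = (Lf m x / qf m x j) * (x j / Nat.gcd (x j) (m j)) from by
    unfold cf; ring]
  rw [Nat.gcd_mul_left]
  rw [Nat.Coprime.gcd_eq_one (Nat.Coprime.symm hco), mul_one]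

lemma addOrderOf_cf (j : Fin d) :
    addOrderOf ((cf m x j : ℕ) : ZMod (Lf m x)) = qf m x j := by
  rw [ZMod.addOrderOf_coe _ Lf_ne_zero, gcd_Lf_cf j, Nat.div_div_self (qf_dvd_Lf j) Lf_ne_zero]

/-- the key homomorphism-like map -/
def phif (z : ∀ j, ZMod (m j)) : ZMod (Lf m x) :=
  ((∑ j, cf m x j * (z j).val : ℕ) : ZMod (Lf m x))

lemma L_dvd_cm (j : Fin d) : Lf m x ∣ cf m x j * m j := by
  exact ⟨x j, by rw [mul_comm (cf m x j) (m j), m_mul_cf j, mul_comm]⟩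

lemma phif_key (j : Fin d) (u v : ZMod (m j)) :
    ((cf m x j * (u + v).val : ℕ) : ZMod (Lf m x)) =
      ((cf m x j * u.val : ℕ) : ZMod (Lf m x)) + ((cf m x j * v.val : ℕ) : ZMod (Lf m x)) := by
  rw [← Nat.cast_add, ← Nat.mul_add]
  rw [ZMod.natCast_eq_natCast_iff]
  have h1 : (u + v).val ≡ u.val + v.val [MOD m j] := by
    rw [ZMod.val_add]
    exact (Nat.mod_modEq _ _)
  have h2 := Nat.ModEq.mul_left' (cf m x j) h1
  exact h2.of_dvd (L_dvd_cm j)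

lemma phif_add (z w : ∀ j, ZMod (m j)) :
    phif (x := x) (z + w) = phif (x := x) z + phif (x := x) w := by
  unfold phif
  push_cast
  rw [← Finset.sum_add_distrib]
  apply Finset.sum_congr rfl
  intro j _
  have := phif_key (x := x) j (z j) (w j)
  push_cast at this ⊢
  simpa using this

lemma phif_zero : phif (x := x) (m := m) 0 = 0 := by
  unfold phif
  simp [ZMod.val_zero]

def Hf : AddSubgroup (ZMod (Lf m x)) where
  carrier := Set.range (phif (x := x) (m := m))
  zero_mem' := ⟨0, phif_zero⟩
  add_mem' := by
    rintro a b ⟨z, rfl⟩ ⟨w, rfl⟩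
    exact ⟨z + w, phif_add z w⟩
  neg_mem' := by
    rintro a ⟨z, rfl⟩
    refine ⟨-z, ?_⟩
    have h := phif_add (x := x) z (-z)
    rw [add_neg_cancel, phif_zero] at h
    linear_combination -h

lemma cf_mem_Hf (hx : ∀ j, x j < m j) (j : Fin d) :
    ((cf m x j : ℕ) : ZMod (Lf m x)) ∈ Hf (m := m) (x := x) := by
  by_cases hm1 : m j = 1
  · have hxj : x j = 0 := by have := hx j; omega
    have : cf m x j = 0 := by unfold cf; rw [hxj]; simp
    rw [this]
    simp only [Nat.cast_zero]
    exact (Hf (m := m) (x := x)).zero_mem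
  · refine ⟨Pi.single j 1, ?_⟩
    unfold phif
    have hval : ∀ j' : Fin d, ((Pi.single j (1 : ZMod (m j)) : ∀ j', ZMod (m j')) j').val =
        if j' = j then 1 else 0 := by
      intro j'
      by_cases h : j' = j
      · subst h
        rw [Pi.single_eq_same, if_pos rfl]
        rw [ZMod.val_one_eq_one_mod, Nat.mod_eq_of_lt]
        have := Nat.pos_of_ne_zero (NeZero.ne (m j'))
        omega
      · rw [Pi.single_eq_of_ne h, if_neg h, ZMod.val_zero]
    rw [Finset.sum_eq_single j]
    · rw [hval j, if_pos rfl, mul_one]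
    · intro j' _ hj'
      rw [hval j', if_neg hj', mul_zero]
    · intro h; exact absurd (Finset.mem_univ j) h

lemma Hf_eq_top (hx : ∀ j, x j < m j) : Hf (m := m) (x := x) = ⊤ := by
  have hfin : Finite (ZMod (Lf m x)) := by
    haveI : NeZero (Lf m x) := ⟨Lf_ne_zero⟩
    infer_instance
  apply AddSubgroup.eq_top_of_card_eq
  have hdvd1 : Nat.card (Hf (m := m) (x := x)) ∣ Nat.card (ZMod (Lf m x)) :=
    AddSubgroup.card_addSubgroup_dvd_card _
  have hdvd2 : Lf m x ∣ Nat.card (Hf (m := m) (x := x)) := by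
    apply Finset.lcm_dvd
    intro j _
    rw [← addOrderOf_cf (x := x) j]
    exact AddSubgroup.addOrderOf_dvd_natCard _ (cf_mem_Hf hx j)
  rw [Nat.card_zmod] at hdvd1 ⊢
  exact Nat.dvd_antisymm hdvd1 hdvd2

lemma phif_surjective (hx : ∀ j, x j < m j) :
    Function.Surjective (phif (x := x) (m := m)) := by
  intro a
  have : a ∈ Hf (m := m) (x := x) := by rw [Hf_eq_top hx]; trivial
  exact this

end Group

section Counting
open Finset

def fiber_equiv {G A : Type*} [AddGroup G] [AddGroup A] (f : G → A)
    (hadd : ∀ z w, f (z + w) = f z + f w) (a : A) (z₀ : G) (h0 : f z₀ = a) :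
    {z : G // f z = a} ≃ {z : G // f z = 0} := by
  have hsub : ∀ z w, f (z - w) = f z - f w := by
    intro z w
    have h := hadd (z - w) w
    rw [sub_add_cancel] at h
    exact eq_sub_of_add_eq h.symm
  exact
  { toFun := fun z => ⟨z.1 - z₀, by rw [hsub, z.2, h0, sub_self]⟩
    invFun := fun z => ⟨z.1 + z₀, by rw [hadd, z.2, h0, zero_add]⟩
    left_inv := fun z => by ext; simp
    right_inv := fun z => by ext; simp }

lemma card_comp {G B : Type*} [Fintype G] [Fintype B] [DecidableEq B] (f : G → B)
    (F : ℕ) (hF : ∀ b, Fintype.card {z : G // f z = b} = F)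
    (Q : B → Prop) [DecidablePred Q] :
    Fintype.card {z : G // Q (f z)} = F * Fintype.card {b : B // Q b} := by
  classical
  have e : {z : G // Q (f z)} ≃ Σ b : {b : B // Q b}, {z : G // f z = b.1} :=
    { toFun := fun z => ⟨⟨f z.1, z.2⟩, ⟨z.1, rfl⟩⟩
      invFun := fun p => ⟨p.2.1, by rw [p.2.2]; exact p.1.2⟩
      left_inv := fun z => by ext; rfl
      right_inv := fun p => by
        rcases p with ⟨⟨b, hb⟩, z, hz⟩
        dsimp at hz
        subst hz
        rfl }
  rw [Fintype.card_congr e, Fintype.card_sigma]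
  simp [hF, mul_comm]

lemma card_fiber_pow {G B : Type*} [Fintype G] [Fintype B] [DecidableEq B] (f : G → B)
    (F : ℕ) (hF : ∀ b, Fintype.card {z : G // f z = b} = F) (k : ℕ) (a : Fin k → B) :
    Fintype.card {z : Fin k → G // (fun i => f (z i)) = a} = F ^ k := by
  classical
  have e1 : {z : Fin k → G // (fun i => f (z i)) = a} ≃
      {z : Fin k → G // ∀ i, f (z i) = a i} := by
    apply Equiv.subtypeEquivRight
    intro z
    exact funext_iff
  have e2 : {z : Fin k → G // ∀ i, f (z i) = a i} ≃ ∀ i, {g : G // f g = a i} :=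
    Equiv.subtypePiEquivPi (p := fun i g => f g = a i)
  rw [Fintype.card_congr (e1.trans e2), Fintype.card_pi]
  simp [hF]

end Counting

section ExpBound
open Finset

lemma count_le_exp {B : Type*} [Fintype B] (W : B → ℝ) (k : ℕ) (Bd : ℝ) (mu : ℝ) (hmu : 0 ≤ mu) :
    (Fintype.card {a : Fin k → B // ∑ i, W (a i) ≤ Bd} : ℝ) ≤
      Real.exp (mu * Bd) * (∑ b, Real.exp (-mu * W b)) ^ k := by
  classical
  rw [Fintype.card_subtype]
  push_cast
  have h1 : ((univ.filter (fun a : Fin k → B => ∑ i, W (a i) ≤ Bd)).card : ℝ) =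
      ∑ a ∈ univ.filter (fun a : Fin k → B => ∑ i, W (a i) ≤ Bd), (1:ℝ) := by
    simp
  rw [h1]
  have h2 : ∀ a ∈ univ.filter (fun a : Fin k → B => ∑ i, W (a i) ≤ Bd),
      (1:ℝ) ≤ Real.exp (mu * (Bd - ∑ i, W (a i))) := by
    intro a ha
    simp only [mem_filter] at ha
    apply Real.one_le_exp
    have := ha.2
    nlinarith
  calc ∑ a ∈ univ.filter (fun a : Fin k → B => ∑ i, W (a i) ≤ Bd), (1:ℝ)
      ≤ ∑ a ∈ univ.filter (fun a : Fin k → B => ∑ i, W (a i) ≤ Bd),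
          Real.exp (mu * (Bd - ∑ i, W (a i))) := Finset.sum_le_sum h2
    _ ≤ ∑ a : Fin k → B, Real.exp (mu * (Bd - ∑ i, W (a i))) := by
        apply Finset.sum_le_sum_of_subset_of_nonneg (filter_subset _ _)
        intro a _ _
        exact (Real.exp_pos _).le
    _ = ∑ a : Fin k → B, Real.exp (mu * Bd) * ∏ i, Real.exp (-mu * W (a i)) := by
        apply Finset.sum_congr rfl
        intro a _
        rw [← Real.exp_sum, ← Real.exp_add]
        congr 1
        rw [show (∑ i, (-mu * W (a i))) = -mu * ∑ i, W (a i) from (Finset.mul_sum _ _ _).symm]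
        ring
    _ = Real.exp (mu * Bd) * (∑ b, Real.exp (-mu * W b)) ^ k := by
        rw [← Finset.mul_sum, Fintype.sum_pow (fun b => Real.exp (-mu * W b)) k]

end ExpBound

section Glue
variable {d : ℕ} (m : Fin d → ℕ) [∀ j, NeZero (m j)] (x : Fin d → ℕ)

lemma sf_phif (hL : NeZero (Lf m x)) (z : ∀ j, ZMod (m j)) :
    signedFrac (∑ j, (x j : ℝ) * (((z j).val : ℕ) : ℝ) / (m j : ℝ)) =
      signedFrac ((((phif (m := m) (x := x) z).val : ℕ) : ℝ) / (Lf m x : ℝ)) := by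
  haveI := hL
  have hLR : (0:ℝ) < (Lf m x : ℝ) := by
    exact_mod_cast Nat.pos_of_ne_zero (Lf_ne_zero (m := m) (x := x))
  set L := Lf m x with hLdef
  set S : ℕ := ∑ j, cf m x j * (z j).val with hS
  have hsum : ∑ j, (x j : ℝ) * (((z j).val : ℕ) : ℝ) / (m j : ℝ) = (S : ℝ) / (L : ℝ) := by
    rw [hS, Nat.cast_sum, Finset.sum_div]
    apply Finset.sum_congr rfl
    intro j _
    have hmj : (0:ℝ) < (m j : ℝ) := by
      exact_mod_cast Nat.pos_of_ne_zero (NeZero.ne (m j))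
    have hmc : (m j : ℝ) * (cf m x j : ℝ) = (x j : ℝ) * (L : ℝ) := by
      exact_mod_cast congrArg (Nat.cast : ℕ → ℝ) (m_mul_cf (m := m) (x := x) j)
    rw [Nat.cast_mul, div_eq_div_iff (ne_of_gt hmj) (ne_of_gt hLR)]
    linear_combination (-(((z j).val : ℕ) : ℝ)) * hmc
  rw [hsum]
  have hphi : (phif (m := m) (x := x) z) = ((S : ℕ) : ZMod L) := rfl
  have hval : ((phif (m := m) (x := x) z).val : ℕ) = S % L := by
    rw [hphi, ZMod.val_natCast]
  rw [hval]
  have hdecomp : (S : ℝ) / (L:ℝ) = ((S % L : ℕ) : ℝ)/(L:ℝ) + ((S / L : ℕ) : ℤ) := by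
    have h0 : S % L + L * (S / L) = S := Nat.mod_add_div S L
    have h : ((S % L : ℕ):ℝ) + (L:ℝ) * ((S / L : ℕ):ℝ) = (S:ℝ) := by exact_mod_cast h0
    have hC : (((S / L : ℕ) : ℤ) : ℝ) = ((S / L : ℕ) : ℝ) := by push_cast; rfl
    rw [hC]
    have hnum : (S:ℝ) = ((S % L : ℕ):ℝ) + ((S / L : ℕ):ℝ) * (L:ℝ) := by linarith
    rw [hnum, add_div, mul_div_assoc, div_self (ne_of_gt hLR), mul_one]
  rw [hdecomp, sf_int_add]

lemma prob_le_factor [NeZero (Lf m x)] (hd : 0 < d) (hx : ∀ j, x j < m j) (k : ℕ) (hk : 1 ≤ k)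
    (T mu f₀ : ℝ) (hmu : 0 ≤ mu) (hf₀ : 0 ≤ f₀)
    (hfac : Real.exp (mu * T) * thetaSum (Lf m x) mu ≤ f₀ * (Lf m x : ℝ)) :
    tupleProb (∀ j, ZMod (m j)) k (fun Z =>
        (1 / (k : ℝ)) * ∑ i,
          (signedFrac (∑ j, (x j : ℝ) * (((Z i j).val : ℕ) : ℝ) / (m j : ℝ))) ^ 2 ≤ T) ≤
      f₀ ^ k := by
  classical
  have hLnz : NeZero (Lf m x) := inferInstance
  set L := Lf m x with hLdef
  have hLpos : 0 < L := Nat.pos_of_ne_zero (NeZero.ne L)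
  have hLR : (0:ℝ) < (L:ℝ) := by exact_mod_cast hLpos
  have hkR : (0:ℝ) < (k:ℝ) := by exact_mod_cast hk
  set G := ∀ j, ZMod (m j) with hG
  set W : ZMod L → ℝ := fun b => (signedFrac ((b.val : ℝ)/(L:ℝ)))^2 with hW
  set Q : (Fin k → ZMod L) → Prop := fun a => ∑ i, W (a i) ≤ (k:ℝ) * T with hQ
  set φ : G → ZMod L := phif (m := m) (x := x) with hphi
  -- fibers of φ all have the same size
  set F : ℕ := Fintype.card {g : G // φ g = 0} with hF
  have hFib : ∀ b, Fintype.card {g : G // φ g = b} = F := by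
    intro b
    obtain ⟨z₀, hz₀⟩ := phif_surjective (m := m) (x := x) hx b
    exact Fintype.card_congr (fiber_equiv φ (phif_add (m := m) (x := x)) b z₀ hz₀)
  have hGcard : Fintype.card G = F * L := by
    have h := card_comp φ F hFib (fun _ => True)
    have h1 : Fintype.card {z : G // True} = Fintype.card G :=
      Fintype.card_congr (Equiv.subtypeUnivEquiv (fun _ => trivial))
    have h2 : Fintype.card {b : ZMod L // True} = L :=
      (Fintype.card_congr (Equiv.subtypeUnivEquiv (fun _ => trivial))).trans (ZMod.card L)
    rw [h1, h2] at h
    exact h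
  have hFpos : 0 < F := by
    rw [hF, Fintype.card_pos_iff]
    exact ⟨⟨0, phif_zero (m := m) (x := x)⟩⟩
  -- event identification
  have hiff : ∀ Z : Fin k → G,
      ((1 / (k : ℝ)) * ∑ i,
        (signedFrac (∑ j, (x j : ℝ) * (((Z i j).val : ℕ) : ℝ) / (m j : ℝ))) ^ 2 ≤ T)
      ↔ Q (fun i => φ (Z i)) := by
    intro Z
    have hsf : ∀ i, signedFrac (∑ j, (x j : ℝ) * (((Z i j).val : ℕ) : ℝ) / (m j : ℝ)) =
        signedFrac (((φ (Z i)).val : ℝ)/(L:ℝ)) := fun i => sf_phif m x hLnz (Z i)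
    simp only [hQ, hW]
    constructor
    · intro h
      have : ∑ i, (signedFrac (((φ (Z i)).val : ℝ)/(L:ℝ)))^2 =
          ∑ i, (signedFrac (∑ j, (x j : ℝ) * (((Z i j).val : ℕ) : ℝ) / (m j : ℝ)))^2 :=
        Finset.sum_congr rfl (fun i _ => by rw [hsf i])
      rw [this]
      rw [one_div, inv_mul_le_iff₀ hkR] at h
      linarith
    · intro h
      have : ∑ i, (signedFrac (∑ j, (x j : ℝ) * (((Z i j).val : ℕ) : ℝ) / (m j : ℝ)))^2 =
          ∑ i, (signedFrac (((φ (Z i)).val : ℝ)/(L:ℝ)))^2 :=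
        Finset.sum_congr rfl (fun i _ => by rw [hsf i])
      rw [one_div, inv_mul_le_iff₀ hkR, this]
      linarith
  -- probability identity
  set N : ℕ := Fintype.card {a : Fin k → ZMod L // ∑ i, W (a i) ≤ (k:ℝ) * T} with hN
  have hcount : Nat.card {Z : Fin k → G // (1 / (k : ℝ)) * ∑ i,
      (signedFrac (∑ j, (x j : ℝ) * (((Z i j).val : ℕ) : ℝ) / (m j : ℝ))) ^ 2 ≤ T} =
      F ^ k * N := by
    rw [Nat.card_eq_fintype_card]
    rw [Fintype.card_congr (Equiv.subtypeEquivRight hiff)]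
    have := card_comp (fun (z : Fin k → G) (i : Fin k) => φ (z i)) (F ^ k)
      (card_fiber_pow φ F hFib k) Q
    rw [this]
  have hprob : tupleProb G k (fun Z =>
      (1 / (k : ℝ)) * ∑ i,
        (signedFrac (∑ j, (x j : ℝ) * (((Z i j).val : ℕ) : ℝ) / (m j : ℝ))) ^ 2 ≤ T) =
      (N:ℝ) / (L:ℝ)^k := by
    unfold tupleProb
    rw [hcount, hGcard]
    push_cast
    rw [mul_pow]
    have hFk : (0:ℝ) < (F:ℝ)^k := pow_pos (by exact_mod_cast hFpos) k
    field_simp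
  rw [hprob]
  -- exponential bound
  have hNle : (N:ℝ) ≤ Real.exp (mu * ((k:ℝ)*T)) * (thetaSum L mu)^k := by
    have := count_le_exp W k ((k:ℝ)*T) mu hmu
    exact this
  have hexp : Real.exp (mu * ((k:ℝ)*T)) = (Real.exp (mu * T))^k := by
    rw [show mu * ((k:ℝ)*T) = (k:ℝ) * (mu * T) by ring, Real.exp_nat_mul]
  have htheta_nn : 0 ≤ thetaSum L mu := by
    apply Finset.sum_nonneg
    intro b _
    exact (Real.exp_pos _).le
  have hNle2 : (N:ℝ) ≤ (f₀ * (L:ℝ))^k := by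
    rw [hexp] at hNle
    refine hNle.trans ?_
    rw [← mul_pow]
    apply pow_le_pow_left₀ (mul_nonneg (Real.exp_pos _).le htheta_nn) hfac
  rw [div_le_iff₀ (by positivity)]
  calc (N:ℝ) ≤ (f₀ * (L:ℝ))^k := hNle2
    _ = f₀^k * (L:ℝ)^k := by rw [mul_pow]

end Glue

section Numeric

lemma exp_le_helper {y : ℝ} (h0 : 0 ≤ y) (h1 : y ≤ 1) : Real.exp y ≤ 1 + 2*y := by
  have hb := Real.exp_bound (x := y) (by rwa [abs_of_nonneg h0]) (n := 1) one_pos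
  simp only [Finset.range_one, Finset.sum_singleton, pow_zero, Nat.factorial_zero,
    Nat.cast_one, div_one, pow_one] at hb
  rw [abs_of_nonneg h0] at hb
  have : |Real.exp y - 1| ≤ y * 2 := by
    refine hb.trans ?_
    norm_num
  have h2 := abs_le.1 this
  linarith [h2.2]

lemma exp_ten_ge : (1024:ℝ) ≤ Real.exp 10 := by
  have h1 : (2:ℝ) ≤ Real.exp 1 := by
    have := Real.add_one_le_exp 1
    linarith
  have h2 : ((2:ℝ))^(10:ℕ) ≤ (Real.exp 1)^(10:ℕ) := by
    apply pow_le_pow_left₀ (by norm_num) h1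
  rw [← Real.exp_nat_mul] at h2
  norm_num at h2 ⊢
  linarith

lemma rpow_tenth_ge {a : ℝ} (ha : 0 ≤ a) (h : a^(10:ℕ) ≤ 2) (b : ℝ) (hb : a ≤ b ∨ True)
    (hs : (2:ℝ) ≤ b) : a ≤ b^((1:ℝ)/10) := by
  have h1 : a^(10:ℕ) ≤ b := h.trans hs
  have h2 := Real.rpow_le_rpow (by positivity) h1 (by norm_num : (0:ℝ) ≤ 1/10)
  rwa [← Real.rpow_natCast a 10, ← Real.rpow_mul ha, show ((10:ℕ):ℝ) * (1/10) = 1 by norm_num,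
    Real.rpow_one] at h2

lemma thetaSum_le_sqrt (L : ℕ) [NeZero L] {mu : ℝ} (hmu : 0 < mu) :
    thetaSum L mu ≤ 1 + Real.sqrt (π * (L:ℝ)^2 / mu) := by
  have hLR : (0:ℝ) < (L:ℝ) := by
    exact_mod_cast Nat.pos_of_ne_zero (NeZero.ne L)
  have hlam : 0 < mu/(L:ℝ)^2 := by positivity
  refine (thetaSum_le L mu).trans ?_
  have hg := gauss_tail_integral hlam L
  have heq : π/(mu/(L:ℝ)^2) = π * (L:ℝ)^2 / mu := by field_simp
  rw [heq] at hg
  linarith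

lemma thetaSum_le_num (L : ℕ) [NeZero L] : thetaSum L (10*(L:ℝ)^2) ≤ 1.002 := by
  have hLR : (0:ℝ) < (L:ℝ) := by
    exact_mod_cast Nat.pos_of_ne_zero (NeZero.ne L)
  refine (thetaSum_le L _).trans ?_
  have hlam : (10*(L:ℝ)^2)/(L:ℝ)^2 = 10 := by field_simp
  rw [hlam]
  have hg := geom_tail (by norm_num : (0:ℝ) < 10) L
  have he : Real.exp (-10) ≤ 1/1024 := by
    rw [Real.exp_neg]
    have h1 : (Real.exp 10)⁻¹ ≤ (1024:ℝ)⁻¹ := inv_anti₀ (by norm_num) exp_ten_ge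
    calc (Real.exp 10)⁻¹ ≤ (1024:ℝ)⁻¹ := h1
      _ = 1/1024 := by norm_num
  have he2 : (0:ℝ) < Real.exp (-10) := Real.exp_pos _
  have hb : Real.exp (-10) / (1 - Real.exp (-10)) ≤ 1/1023 := by
    rw [div_le_iff₀ (by linarith)]
    linarith
  nlinarith [hg]

end Numeric

set_option maxHeartbeats 1000000 in
theorem statement9 :
    ∃ c₁ C₂ : ℝ, 0 < c₁ ∧ c₁ < 1 ∧ 0 < C₂ ∧
    ∀ (d : ℕ), 0 < d → ∀ (m : Fin d → ℕ) [∀ j, NeZero (m j)],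
    ∀ (k : ℕ), 1 ≤ k →
    ∀ (x : Fin d → ℕ), (∀ j, x j < m j) →
    ∀ n : ℕ, n = Fintype.card (∀ j, ZMod (m j)) →
    ∀ s : ℕ, s = Finset.univ.sup (fun j => m j / Nat.gcd (x j) (m j)) →
      (((s : ℝ) ≤ C₂ * (n : ℝ) ^ (1 / (k : ℝ)) →
        tupleProb (∀ j, ZMod (m j)) k (fun Z =>
            (1 / (k : ℝ)) * ∑ i,
              (signedFrac (∑ j, (x j : ℝ) * ((Z i j).val : ℝ) / (m j : ℝ))) ^ 2 ≤
            c₁ * (n : ℝ) ^ (-(2 / (k : ℝ)))) ≤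
          (s : ℝ) ^ (-(9 * (k : ℝ) / 10))) ∧
      (C₂ * (n : ℝ) ^ (1 / (k : ℝ)) < (s : ℝ) →
        tupleProb (∀ j, ZMod (m j)) k (fun Z =>
            (1 / (k : ℝ)) * ∑ i,
              (signedFrac (∑ j, (x j : ℝ) * ((Z i j).val : ℝ) / (m j : ℝ))) ^ 2 ≤
            c₁ * (n : ℝ) ^ (-(2 / (k : ℝ)))) ≤
          (2 : ℝ) ^ (-(k : ℝ)) / (n : ℝ))) := by
  refine ⟨1/1000000, 12, by norm_num, by norm_num, by norm_num, ?_⟩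
  intro d hd m inst k hk x hx n hn s hs
  classical
  haveI hLnz : NeZero (Lf m x) := ⟨Lf_ne_zero (m := m) (x := x)⟩
  have hLpos : 0 < Lf m x := Nat.pos_of_ne_zero (Lf_ne_zero (m := m) (x := x))
  have hLR : (0:ℝ) < (Lf m x : ℝ) := by exact_mod_cast hLpos
  have hkpos : (0:ℝ) < (k:ℝ) := by exact_mod_cast hk
  have hn1 : 1 ≤ n := by
    rw [hn]
    exact Fintype.card_pos
  have hnR : (1:ℝ) ≤ (n:ℝ) := by exact_mod_cast hn1
  have hn0 : (0:ℝ) ≤ (n:ℝ) := by linarith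
  set ν : ℝ := (n:ℝ)^(1/(k:ℝ)) with hν
  have hν1 : (1:ℝ) ≤ ν := by
    calc (1:ℝ) = (n:ℝ)^(0:ℝ) := (Real.rpow_zero _).symm
      _ ≤ ν := Real.rpow_le_rpow_of_exponent_le hnR (by positivity)
  have hνpos : (0:ℝ) < ν := by linarith
  have hνk : ν^k = (n:ℝ) := by
    rw [hν, ← Real.rpow_natCast ((n:ℝ)^(1/(k:ℝ))) k, ← Real.rpow_mul hn0,
      show (1/(k:ℝ)) * (k:ℕ) = 1 by field_simp, Real.rpow_one]
  have hTν : (n:ℝ)^(-(2/(k:ℝ))) = (ν^2)⁻¹ := by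
    rw [show -(2/(k:ℝ)) = (1/(k:ℝ)) * (-2) by ring, Real.rpow_mul hn0, ← hν]
    rw [Real.rpow_neg hνpos.le, show ((2):ℝ) = ((2:ℕ):ℝ) by norm_num, Real.rpow_natCast]
  set T : ℝ := (1/1000000) * (n:ℝ)^(-(2/(k:ℝ))) with hT
  have hsLn : s ≤ Lf m x := by
    rw [hs]
    apply Finset.sup_le
    intro j _
    exact Nat.le_of_dvd hLpos (qf_dvd_Lf (m := m) (x := x) j)
  have hsL : (s:ℝ) ≤ (Lf m x : ℝ) := by exact_mod_cast hsLn
  have hs1 : 1 ≤ s := by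
    rw [hs]
    calc 1 ≤ qf m x ⟨0, hd⟩ := Nat.one_le_iff_ne_zero.2 (qf_ne_zero (m := m) (x := x) _)
      _ ≤ _ := Finset.le_sup (Finset.mem_univ _)
  -- bound for theta at the "integral" choice of mu
  have hmuI : (0:ℝ) < 1000000 * ν^2 := by positivity
  have hmuT1 : (1000000 * ν^2) * T = 1 := by
    rw [hT, hTν]
    field_simp
  have hθI : thetaSum (Lf m x) (1000000 * ν^2) ≤ 1 + (2/1000)*((Lf m x : ℝ)/ν) := by
    refine (thetaSum_le_sqrt (Lf m x) hmuI).trans ?_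
    have heq : π * (Lf m x : ℝ)^2 / (1000000 * ν^2) = (π/1000000)*((Lf m x : ℝ)/ν)^2 := by
      field_simp
      try ring
    rw [heq, Real.sqrt_mul (by positivity) _, Real.sqrt_sq (by positivity)]
    have hπ : Real.sqrt (π/1000000) ≤ 2/1000 := by
      have h1 : π/1000000 ≤ (2/1000)^2 := by
        nlinarith [Real.pi_le_four]
      calc Real.sqrt (π/1000000) ≤ Real.sqrt ((2/1000)^2) := Real.sqrt_le_sqrt h1
        _ = 2/1000 := Real.sqrt_sq (by norm_num)
    have hw : (0:ℝ) ≤ (Lf m x : ℝ)/ν := by positivity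
    nlinarith
  have hfI : Real.exp ((1000000 * ν^2) * T) * thetaSum (Lf m x) (1000000 * ν^2) ≤
      2.7182818286 * (1 + (2/1000)*((Lf m x : ℝ)/ν)) := by
    rw [hmuT1]
    have hθnn : (0:ℝ) ≤ thetaSum (Lf m x) (1000000 * ν^2) := by
      apply Finset.sum_nonneg
      intro b _
      exact (Real.exp_pos _).le
    have he1 : Real.exp 1 ≤ 2.7182818286 := Real.exp_one_lt_d9.le
    have h2 : (0:ℝ) ≤ 1 + (2/1000)*((Lf m x : ℝ)/ν) := by positivity
    calc Real.exp 1 * thetaSum (Lf m x) (1000000 * ν^2)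
        ≤ Real.exp 1 * (1 + (2/1000)*((Lf m x : ℝ)/ν)) := by
          exact mul_le_mul_of_nonneg_left hθI (Real.exp_pos _).le
      _ ≤ 2.7182818286 * (1 + (2/1000)*((Lf m x : ℝ)/ν)) :=
          mul_le_mul_of_nonneg_right he1 h2
  constructor
  · -- Case 1 : s ≤ 12 ν
    intro hcase
    by_cases hs2 : 2 ≤ s
    · have hsR2 : (2:ℝ) ≤ (s:ℝ) := by exact_mod_cast hs2
      have hspos : (0:ℝ) < (s:ℝ) := by linarith
      have hf₀nn : (0:ℝ) ≤ (s:ℝ)^(-(9/10:ℝ)) := Real.rpow_nonneg hspos.le _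
      have htenth : (s:ℝ)^(-(9/10:ℝ)) * (s:ℝ) = (s:ℝ)^((1:ℝ)/10) := by
        nth_rewrite 2 [← Real.rpow_one (s:ℝ)]
        rw [← Real.rpow_add hspos]
        norm_num
      have hgoal : ((s:ℝ)^(-(9/10:ℝ)))^k = (s:ℝ)^(-(9*(k:ℝ)/10)) := by
        rw [← Real.rpow_natCast ((s:ℝ)^(-(9/10:ℝ))) k, ← Real.rpow_mul hspos.le]
        congr 1
        ring
      rw [← hgoal]
      by_cases hLν : (Lf m x : ℝ) ≤ 40 * ν
      · -- small L : mu = 10 L^2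
        apply prob_le_factor m x hd hx k hk T (10*(Lf m x:ℝ)^2) ((s:ℝ)^(-(9/10:ℝ)))
          (by positivity) hf₀nn
        have hθ := thetaSum_le_num (Lf m x)
        have hν2 : (0:ℝ) < ν^2 := by positivity
        have hiv : ν^2 * (ν^2)⁻¹ = 1 := mul_inv_cancel₀ (ne_of_gt hν2)
        have hL2 : (Lf m x:ℝ)^2 ≤ 1600 * ν^2 := by
          have h := pow_le_pow_left₀ hLR.le hLν 2
          calc (Lf m x:ℝ)^2 ≤ (40*ν)^2 := h
            _ = 1600*ν^2 := by ring
        have hivnn : (0:ℝ) ≤ (ν^2)⁻¹ := by positivity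
        have hstep : (Lf m x:ℝ)^2 * (ν^2)⁻¹ ≤ 1600 := by
          have h2 := mul_le_mul_of_nonneg_right hL2 hivnn
          rwa [mul_assoc, hiv, mul_one] at h2
        have hmuT : (10*(Lf m x:ℝ)^2) * T ≤ 0.016 := by
          rw [hT, hTν]
          calc (10*(Lf m x:ℝ)^2) * ((1/1000000) * (ν^2)⁻¹)
              = ((Lf m x:ℝ)^2 * (ν^2)⁻¹) * (10/1000000) := by ring
            _ ≤ 1600 * (10/1000000) := mul_le_mul_of_nonneg_right hstep (by norm_num)
            _ ≤ 0.016 := by norm_num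
        have hmuT0 : (0:ℝ) ≤ (10*(Lf m x:ℝ)^2) * T := by
          rw [hT, hTν]
          positivity
        have hexp : Real.exp ((10*(Lf m x:ℝ)^2) * T) ≤ 1.032 := by
          calc Real.exp ((10*(Lf m x:ℝ)^2) * T) ≤ Real.exp 0.016 :=
              Real.exp_le_exp.2 hmuT
            _ ≤ 1 + 2*0.016 := exp_le_helper (by norm_num) (by norm_num)
            _ = 1.032 := by norm_num
        have hθnn : (0:ℝ) ≤ thetaSum (Lf m x) (10*(Lf m x:ℝ)^2) := by
          apply Finset.sum_nonneg
          intro b _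
          exact (Real.exp_pos _).le
        have hprod : Real.exp ((10*(Lf m x:ℝ)^2) * T) * thetaSum (Lf m x) (10*(Lf m x:ℝ)^2)
            ≤ 1.035 := by
          calc Real.exp ((10*(Lf m x:ℝ)^2) * T) * thetaSum (Lf m x) (10*(Lf m x:ℝ)^2)
              ≤ 1.032 * 1.002 := by
                apply mul_le_mul hexp hθ hθnn (by norm_num)
            _ ≤ 1.035 := by norm_num
        refine hprod.trans ?_
        have hs10 : (1.035:ℝ) ≤ (s:ℝ)^((1:ℝ)/10) :=
          rpow_tenth_ge (by norm_num) (by norm_num) _ (Or.inr trivial) hsR2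
        calc (1.035:ℝ) ≤ (s:ℝ)^((1:ℝ)/10) := hs10
          _ = (s:ℝ)^(-(9/10:ℝ)) * (s:ℝ) := htenth.symm
          _ ≤ (s:ℝ)^(-(9/10:ℝ)) * (Lf m x : ℝ) :=
              mul_le_mul_of_nonneg_left hsL hf₀nn
      · -- large L : mu = 1000000 ν²
        push_neg at hLν
        apply prob_le_factor m x hd hx k hk T (1000000 * ν^2) ((s:ℝ)^(-(9/10:ℝ)))
          hmuI.le hf₀nn
        refine hfI.trans ?_
        -- need : 2.7182818286 * (1 + 0.002 w) ≤ s^{-9/10} * L  with w = L/ν > 40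
        have hw40 : (40:ℝ) < (Lf m x : ℝ)/ν := by
          rw [lt_div_iff₀ hνpos]
          linarith
        have hsinv : ((12:ℝ) * ν)⁻¹ ≤ (s:ℝ)^(-(9/10:ℝ)) := by
          have h910 : (s:ℝ)^((9:ℝ)/10) ≤ (s:ℝ)^(1:ℝ) :=
            Real.rpow_le_rpow_of_exponent_le (by linarith) (by norm_num)
          rw [Real.rpow_one] at h910
          have hle : (s:ℝ)^((9:ℝ)/10) ≤ 12 * ν := by
            calc (s:ℝ)^((9:ℝ)/10) ≤ (s:ℝ) := h910
              _ ≤ 12 * ν := hcase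
          rw [show -(9/10:ℝ) = -((9:ℝ)/10) by norm_num, Real.rpow_neg hspos.le]
          apply inv_anti₀ (Real.rpow_pos_of_pos hspos _) hle
        have hLbound : ((12:ℝ)*ν)⁻¹ * (Lf m x : ℝ) ≤ (s:ℝ)^(-(9/10:ℝ)) * (Lf m x : ℝ) :=
          mul_le_mul_of_nonneg_right hsinv hLR.le
        refine le_trans ?_ hLbound
        rw [show ((12:ℝ)*ν)⁻¹ * (Lf m x : ℝ) = ((Lf m x : ℝ)/ν)/12 by
          rw [mul_inv_rev, div_div, div_eq_mul_inv, mul_inv_rev]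
          ring]
        set w := (Lf m x : ℝ)/ν with hwdef
        linarith
    · -- s = 1
      have hseq : s = 1 := by omega
      rw [hseq]
      push_cast
      rw [Real.one_rpow]
      apply tupleProb_le_one
  · -- Case 2 : 12 ν < s
    intro hcase
    have hw12 : (12:ℝ) < (Lf m x : ℝ)/ν := by
      rw [lt_div_iff₀ hνpos]
      calc 12 * ν < (s:ℝ) := hcase
        _ ≤ (Lf m x : ℝ) := hsL
    have hgoal2 : ((1/2:ℝ) * ν⁻¹)^k = (2:ℝ)^(-(k:ℝ)) / (n:ℝ) := by
      rw [mul_pow, inv_pow, hνk]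
      rw [Real.rpow_neg (by norm_num : (0:ℝ) ≤ 2), Real.rpow_natCast]
      simp [div_eq_mul_inv, inv_pow]
    rw [← hgoal2]
    apply prob_le_factor m x hd hx k hk T (1000000 * ν^2) ((1/2:ℝ) * ν⁻¹)
      hmuI.le (by positivity)
    refine hfI.trans ?_
    rw [show ((1/2:ℝ) * ν⁻¹) * (Lf m x : ℝ) = ((Lf m x : ℝ)/ν)/2 by
      simp only [div_eq_mul_inv, mul_inv_rev, one_mul]
      ring]
    set w := (Lf m x : ℝ)/ν with hwdef
    linarith
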